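/- arXiv:1503.04245 — 2 statements merged into one kernel-verified Lean document; each statement's English description precedes it below -/
import Mathlib

section
/- For every natural number n, the sum over all parking functions f on [n] of the product ∏_{i=1}^{n} (m_i)!, where m_i = #f^{-1}(i), equals (2n)!/(n+1)!. -/
/-- A parking function on `[n] = {1, …, n}` (modeled by `Fin n`, with `i : Fin n`
representing the value `i + 1`). -/
def IsParkingFunction (n : ℕ) (f : Fin n → Fin n) : Prop :=
  ∀ k ∈ Finset.Icc 1 n, k ≤ (Finset.univ.filter fun i => (f i : ℕ) + 1 ≤ k).card

instance (n : ℕ) : DecidablePred (IsParkingFunction n) := fun f => by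
  unfold IsParkingFunction; infer_instance

/-- `m_i = #f⁻¹(i)`, the size of the fiber of `f` over `i`. -/
def fiberCard (n : ℕ) (f : Fin n → Fin n) (i : Fin n) : ℕ :=
  (Finset.univ.filter fun j => f j = i).card


namespace PFAux
open Finset DyckStep
variable {n : ℕ}
variable {n : ℕ}

lemma count_take_map (f : ℕ → DyckStep) (N i : ℕ) (s : DyckStep) :
    (((List.range N).map f).take i).count s
      = ((Finset.range (min i N)).filter (fun j => f j = s)).card := by
  rw [← List.map_take, List.take_range, List.count, List.countP_map,
      List.countP_eq_length_filter]
  rfl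

lemma count_map (f : ℕ → DyckStep) (N : ℕ) (s : DyckStep) :
    (((List.range N).map f)).count s
      = ((Finset.range N).filter (fun j => f j = s)).card := by
  rw [List.count, List.countP_map, List.countP_eq_length_filter]
  rfl

lemma card_filter_val_lt (c : ℕ) (hcn : c ≤ n) :
    ((univ : Finset (Fin n)).filter fun k : Fin n => (k : ℕ) < c).card = c := by
  have h1 : ((Finset.Iio n).filter (· < c)) = Finset.Iio c := by
    ext j; simp only [mem_filter, mem_Iio]; omega
  rw [← Fin.map_valEmbedding_univ, Finset.filter_map] at h1
  have := congrArg Finset.card h1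
  rw [Finset.card_map, Nat.card_Iio] at this
  convert this using 2
  ext k; simp

def posSet (n : ℕ) (w : Fin n → Fin n) : Finset ℕ :=
  univ.image fun k : Fin n => (k : ℕ) + w k

lemma strictMono_pos (w : Fin n → Fin n) (hw : Monotone w) :
    StrictMono fun k : Fin n => (k : ℕ) + (w k : ℕ) := by
  intro a b h
  have h1 : (w a : ℕ) ≤ w b := hw h.le
  have h2 : (a : ℕ) < b := h
  simpa using by omega

def dyckList (n : ℕ) (w : Fin n → Fin n) : List DyckStep :=
  (List.range (2 * n)).map fun j => if j ∈ posSet n w then U else D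

lemma filter_eqU (w : Fin n → Fin n) (M : ℕ) :
    ((Finset.range M).filter fun j => (if j ∈ posSet n w then U else D) = U)
      = (univ.filter fun k : Fin n => (k : ℕ) + w k < M).image
          (fun k : Fin n => (k : ℕ) + w k) := by
  have h : ((Finset.range M).filter fun j => (if j ∈ posSet n w then U else D) = U)
      = (Finset.range M).filter (fun j => j ∈ posSet n w) :=
    Finset.filter_congr (fun j _ => by by_cases h : j ∈ posSet n w <;> simp [h])
  rw [h]; ext j
  simp only [mem_filter, mem_range, posSet, mem_image, mem_univ, true_and]
  constructor
  · rintro ⟨hj, k, rfl⟩; exact ⟨k, hj, rfl⟩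
  · rintro ⟨k, hk, rfl⟩; exact ⟨hk, k, rfl⟩

lemma card_filter_eqU (w : Fin n → Fin n) (hw : Monotone w) (M : ℕ) :
    ((Finset.range M).filter fun j => (if j ∈ posSet n w then U else D) = U).card
      = (univ.filter fun k : Fin n => (k : ℕ) + w k < M).card := by
  rw [filter_eqU w M,
    Finset.card_image_of_injective _ (strictMono_pos w hw).injective]

lemma card_filter_eqD (M : ℕ) (f : ℕ → DyckStep) :
    ((Finset.range M).filter fun j => f j = D).card
      = M - ((Finset.range M).filter fun j => f j = U).card := by
  have h := Finset.card_filter_add_card_filter_not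
    (s := Finset.range M) (p := fun j => f j = U)
  have h2 : ((Finset.range M).filter fun j => ¬ f j = U)
      = ((Finset.range M).filter fun j => f j = D) := by
    apply Finset.filter_congr; intro j _; rcases (f j).dichotomy with h | h <;> simp [h]
  rw [Finset.card_range, h2] at h
  omega

section cons
variable (w : Fin n → Fin n)

/-- lower bound on number of Us in a prefix -/
lemma cU_lower (hd : ∀ k, (w k : ℕ) ≤ k) (M : ℕ) (hM : M ≤ 2 * n) :
    (M + 1) / 2 ≤ (univ.filter fun k : Fin n => (k : ℕ) + w k < M).card := by
  have hsub : (univ.filter fun k : Fin n => (k : ℕ) < (M + 1) / 2)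
      ⊆ (univ.filter fun k : Fin n => (k : ℕ) + w k < M) := by
    intro k hk
    simp only [mem_filter, mem_univ, true_and] at hk ⊢
    have := hd k
    omega
  have := Finset.card_le_card hsub
  rwa [card_filter_val_lt _ (by omega)] at this

lemma cU_total (hd : ∀ k, (w k : ℕ) ≤ k) :
    (univ.filter fun k : Fin n => (k : ℕ) + w k < 2 * n).card = n := by
  rw [Finset.filter_true_of_mem, Finset.card_univ, Fintype.card_fin]
  intro k _
  have h1 := hd k
  have h2 := k.isLt
  omega

def dyckOf (hw : Monotone w) (hd : ∀ k, (w k : ℕ) ≤ k) : DyckWord where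
  toList := dyckList n w
  count_U_eq_count_D := by
    rw [dyckList, count_map, count_map, card_filter_eqU w hw, cU_total w hd,
      card_filter_eqD, card_filter_eqU w hw, cU_total w hd]
    omega
  count_D_le_count_U i := by
    rw [dyckList, count_take_map, count_take_map, card_filter_eqU w hw,
      card_filter_eqD, card_filter_eqU w hw]
    set M := min i (2 * n) with hM
    have h1 := cU_lower w hd M (by omega)
    omega

lemma semilength_dyckOf (hw : Monotone w) (hd : ∀ k, (w k : ℕ) ≤ k) : (dyckOf w hw hd).semilength = n := by
  show (dyckList n w).count U = n
  rw [dyckList, count_map, card_filter_eqU w hw, cU_total w hd]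

end cons


lemma count_U_add_count_D (l : List DyckStep) : l.count U + l.count D = l.length := by
  induction l with
  | nil => simp
  | cons a t ih =>
    rcases a.dichotomy with h | h <;> subst h <;>
      simp [List.count_cons, ← ih] <;> omega

lemma mem_posSet_lt (w : Fin n → Fin n) (hd : ∀ k, (w k : ℕ) ≤ k) {j : ℕ}
    (hj : j ∈ posSet n w) : j < 2 * n := by
  simp only [posSet, mem_image, mem_univ, true_and] at hj
  obtain ⟨k, rfl⟩ := hj
  have h1 := hd k
  have h2 := k.isLt
  omega

lemma dyckOf_inj {w w' : Fin n → Fin n} (hw : Monotone w) (hd : ∀ k, (w k : ℕ) ≤ k)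
    (hw' : Monotone w') (hd' : ∀ k, (w' k : ℕ) ≤ k)
    (h : dyckOf w hw hd = dyckOf w' hw' hd') : w = w' := by
  have hl : dyckList n w = dyckList n w' := congrArg DyckWord.toList h
  have hmem : ∀ j < 2 * n, (j ∈ posSet n w ↔ j ∈ posSet n w') := by
    intro j hj
    have h1 : (dyckList n w)[j]'(by simp [dyckList, hj]) =
        (dyckList n w')[j]'(by simp [dyckList, hj]) := by simp only [hl]
    simp only [dyckList, List.getElem_map, List.getElem_range] at h1
    by_cases h2 : j ∈ posSet n w <;> by_cases h3 : j ∈ posSet n w' <;>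
      simp_all
  have hset : posSet n w = posSet n w' := by
    ext j
    by_cases hj : j < 2 * n
    · exact hmem j hj
    · constructor <;> intro hin
      · exact absurd (mem_posSet_lt w hd hin) hj
      · exact absurd (mem_posSet_lt w' hd' hin) hj
  have hcard : (posSet n w).card = n := by
    rw [posSet, Finset.card_image_of_injective _ (strictMono_pos w hw).injective,
      card_univ, Fintype.card_fin]
  have hg : (fun k : Fin n => (k : ℕ) + w k)
      = ⇑((posSet n w).orderEmbOfFin hcard) :=
    Finset.orderEmbOfFin_unique hcard
      (fun k => Finset.mem_image_of_mem _ (mem_univ k)) (strictMono_pos w hw)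
  have hg' : (fun k : Fin n => (k : ℕ) + w' k)
      = ⇑((posSet n w).orderEmbOfFin hcard) := by
    refine Finset.orderEmbOfFin_unique hcard (fun k => ?_) (strictMono_pos w' hw')
    rw [hset]; exact Finset.mem_image_of_mem _ (mem_univ k)
  funext k
  have := congrFun (hg.trans hg'.symm) k
  exact Fin.ext (by omega)

lemma dyckOf_surj (p : DyckWord) (hp : p.semilength = n) :
    ∃ (w : Fin n → Fin n) (hw : Monotone w) (hd : ∀ k, (w k : ℕ) ≤ k),
      dyckOf w hw hd = p := by
  have hlen : p.toList.length = 2 * n := by rw [← p.two_mul_semilength_eq_length, hp]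
  set l := p.toList with hldef
  have hrepr : l = (List.range (2 * n)).map (fun j => l.getD j D) := by
    apply List.ext_getElem
    · simp [hlen]
    · intro j h1 h2
      simp only [List.getElem_map, List.getElem_range]
      exact (List.getD_eq_getElem l D h1).symm
  set T := (Finset.range (2 * n)).filter (fun j => l.getD j D = U) with hT
  have hTcard : T.card = n := by
    have h2 : l.count U = T.card := by
      conv_lhs => rw [hrepr]
      rw [count_map]
    have h3 : l.count U = n := by rw [← hp]; rfl
    omega
  set e := T.orderEmbOfFin hTcard with he
  have heT : ∀ k, e k ∈ T := fun k => T.orderEmbOfFin_mem hTcard k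
  have heLt : ∀ k : Fin n, (e k : ℕ) < 2 * n := by
    intro k; have := heT k; rw [hT, mem_filter, mem_range] at this; exact this.1
  have heU : ∀ k, l.getD (e k) D = U := by
    intro k; have := heT k; rw [hT, mem_filter] at this; exact this.2
  have hgap : ∀ (d : ℕ) (k k' : Fin n), (k' : ℕ) = (k : ℕ) + d →
      (e k : ℕ) + d ≤ e k' := by
    intro d
    induction d with
    | zero =>
      intro k k' h
      have : k' = k := Fin.ext (by omega)
      subst this; omega
    | succ d ih =>
      intro k k' h
      have hk'' : (k : ℕ) + d < n := by have := k'.isLt; omega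
      have h1 := ih k ⟨(k : ℕ) + d, hk''⟩ rfl
      have h2 : e ⟨(k : ℕ) + d, hk''⟩ < e k' :=
        e.strictMono (by rw [Fin.lt_def]; simp; omega)
      omega
  have hek_ge : ∀ k : Fin n, (k : ℕ) ≤ e k := by
    intro k
    have hn : 0 < n := k.pos
    have := hgap (k : ℕ) ⟨0, hn⟩ k (by simp)
    omega
  have himg : (univ.image fun k : Fin n => (e k : ℕ)) = T := by
    apply Finset.eq_of_subset_of_card_le
    · intro j hj
      simp only [mem_image, mem_univ, true_and] at hj
      obtain ⟨k, rfl⟩ := hj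
      exact heT k
    · rw [hTcard, Finset.card_image_of_injective _ (fun a b hab => e.injective hab),
        card_univ, Fintype.card_fin]
  have hcount : ∀ i : ℕ, (l.take i).count U = (T.filter (· < min i (2 * n))).card := by
    intro i
    conv_lhs => rw [hrepr]
    rw [count_take_map]
    congr 1
    ext j
    simp only [mem_filter, mem_range, hT]
    constructor
    · rintro ⟨h1, h2⟩; exact ⟨⟨by omega, h2⟩, h1⟩
    · rintro ⟨⟨h1, h2⟩, h3⟩; exact ⟨h3, h2⟩
  have hcountk : ∀ k : Fin n, (l.take (e k)).count U = (k : ℕ) := by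
    intro k
    rw [hcount]
    have hmin : min ((e k : ℕ)) (2 * n) = e k := by have := heLt k; omega
    rw [hmin, ← himg, Finset.filter_image]
    have hfe : (univ.filter fun a : Fin n => (e a : ℕ) < (e k : ℕ))
        = univ.filter fun a : Fin n => (a : ℕ) < (k : ℕ) := by
      apply Finset.filter_congr
      intro a _
      rw [← Fin.lt_def]
      exact ⟨fun h => e.strictMono.lt_iff_lt.mp h, fun h => e.strictMono h⟩
    calc ((univ.filter fun a : Fin n => ((e a : ℕ) < (e k : ℕ))).image
            fun a => (e a : ℕ)).card
        = (univ.filter fun a : Fin n => (a : ℕ) < (k : ℕ)).card := by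
          rw [hfe, Finset.card_image_of_injective _ (fun a b hab => e.injective hab)]
      _ = (k : ℕ) := card_filter_val_lt _ (le_of_lt k.isLt)
  have hek_le : ∀ k : Fin n, (e k : ℕ) ≤ 2 * k := by
    intro k
    have hpre := p.count_D_le_count_U (e k)
    have h1 := count_U_add_count_D (l.take (e k))
    have h2 : (l.take (e k)).length = min ((e k : ℕ)) l.length := List.length_take
    have h3 := hcountk k
    have h4 := heLt k
    have h5 := hek_ge k
    rw [hlen] at h2
    rw [← hldef] at hpre
    omega
  refine ⟨fun k => ⟨(e k : ℕ) - k, by have := hek_le k; have := k.isLt; omega⟩,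
    ?_, ?_, ?_⟩
  · intro a b hab
    have h1 := hgap ((b : ℕ) - a) a b (by have : (a : ℕ) ≤ b := hab; omega)
    have h2 := hek_ge a
    rw [Fin.le_def]
    simp only []
    omega
  · intro k; simp only []; have := hek_le k; omega
  · have hpos : posSet n (fun k => ⟨(e k : ℕ) - k, by have := hek_le k; have := k.isLt; omega⟩) = T := by
      refine Eq.trans ?_ himg
      apply Finset.image_congr
      intro k _
      show (k : ℕ) + ((e k : ℕ) - k) = e k
      have := hek_ge k
      omega
    apply DyckWord.ext
    show dyckList n _ = l
    rw [dyckList]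
    conv_rhs => rw [hrepr]
    apply List.map_congr_left
    intro j hj
    rw [List.mem_range] at hj
    rw [hpos]
    by_cases hjT : j ∈ T
    · rw [if_pos hjT]
      rw [hT, mem_filter] at hjT
      exact hjT.2.symm
    · rw [if_neg hjT]
      rcases (l.getD j D).dichotomy with h | h
      · exfalso; apply hjT; rw [hT, mem_filter, mem_range]; exact ⟨hj, h⟩
      · exact h.symm

theorem card_mono_below (n : ℕ) :
    Nat.card {w : Fin n → Fin n // Monotone w ∧ ∀ k, (w k : ℕ) ≤ k} = catalan n := by
  classical
  have hbij : Function.Bijective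
      (fun x : {w : Fin n → Fin n // Monotone w ∧ ∀ k, (w k : ℕ) ≤ k} =>
        (⟨dyckOf x.1 x.2.1 x.2.2, semilength_dyckOf x.1 x.2.1 x.2.2⟩ :
          {p : DyckWord // p.semilength = n})) := by
    constructor
    · rintro ⟨w, hw, hd⟩ ⟨w', hw', hd'⟩ hx
      have := congrArg Subtype.val hx
      exact Subtype.ext (dyckOf_inj hw hd hw' hd' this)
    · rintro ⟨p, hp⟩
      obtain ⟨w, hw, hd, hdp⟩ := dyckOf_surj p hp
      exact ⟨⟨w, hw, hd⟩, Subtype.ext hdp⟩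
  rw [Nat.card_congr (Equiv.ofBijective _ hbij), Nat.card_eq_fintype_card,
    DyckWord.card_dyckWord_semilength_eq_catalan]



lemma card_filter_comp (p : Fin n → Prop) [DecidablePred p] (σ : Equiv.Perm (Fin n)) :
    (univ.filter fun i => p (σ i)).card = (univ.filter p).card := by
  apply Finset.card_bij (fun a _ => σ a)
  · intro a ha; simp only [mem_filter, mem_univ, true_and] at *; exact ha
  · intro a _ b _ h; exact σ.injective h
  · intro b hb
    refine ⟨σ.symm b, ?_, by simp⟩
    simp only [mem_filter, mem_univ, true_and, Equiv.apply_symm_apply] at *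
    exact hb

lemma park_comp (f : Fin n → Fin n) (σ : Equiv.Perm (Fin n)) :
    IsParkingFunction n (f ∘ ⇑σ) ↔ IsParkingFunction n f := by
  unfold IsParkingFunction
  refine forall₂_congr fun k hk => ?_
  have h := card_filter_comp (fun i => (f i : ℕ) + 1 ≤ k) σ
  have h2 : (univ.filter fun i => ((f ∘ ⇑σ) i : ℕ) + 1 ≤ k)
      = univ.filter fun i => (f (σ i) : ℕ) + 1 ≤ k := rfl
  rw [h2, h]

lemma mono_park_iff {w : Fin n → Fin n} (hm : Monotone w) :
    IsParkingFunction n w ↔ ∀ k, (w k : ℕ) ≤ k := by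
  constructor
  · intro h k
    by_contra hlt
    push_neg at hlt
    have h1 := h ((k : ℕ) + 1) (by rw [mem_Icc]; have := k.isLt; omega)
    have hsub : (univ.filter fun i => (w i : ℕ) + 1 ≤ (k : ℕ) + 1)
        ⊆ univ.filter fun i : Fin n => (i : ℕ) < k := by
      intro i hi
      simp only [mem_filter, mem_univ, true_and] at hi ⊢
      by_contra hik
      push_neg at hik
      have hki : w k ≤ w i := hm (by rwa [Fin.le_def])
      rw [Fin.le_def] at hki
      omega
    have h2 := Finset.card_le_card hsub
    rw [card_filter_val_lt _ (le_of_lt k.isLt)] at h2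
    omega
  · intro h K hK
    rw [mem_Icc] at hK
    have hKn : K - 1 < n := by omega
    have hsub : (univ.filter fun i : Fin n => (i : ℕ) < K)
        ⊆ univ.filter fun i => (w i : ℕ) + 1 ≤ K := by
      intro i hi
      simp only [mem_filter, mem_univ, true_and] at hi ⊢
      have h1 : w i ≤ w ⟨K - 1, hKn⟩ := hm (by rw [Fin.le_def]; simp; omega)
      rw [Fin.le_def] at h1
      have h2 := h ⟨K - 1, hKn⟩
      simp only [] at h2
      omega
    have h2 := Finset.card_le_card hsub
    rwa [card_filter_val_lt _ (by omega)] at h2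

lemma sort_comp (w : Fin n → Fin n) (hm : Monotone w) (τ : Equiv.Perm (Fin n)) :
    (w ∘ ⇑τ) ∘ ⇑(Tuple.sort (w ∘ ⇑τ)) = w := by
  have h1 : Monotone ((w ∘ ⇑τ) ∘ ⇑τ⁻¹) := by
    have he : (w ∘ ⇑τ) ∘ ⇑τ⁻¹ = w := by
      funext i
      simp [Function.comp, Equiv.Perm.inv_def]
    rw [he]; exact hm
  have h2 := Tuple.unique_monotone (Tuple.monotone_sort (w ∘ ⇑τ)) h1
  rw [h2]
  funext i
  simp [Function.comp, Equiv.Perm.inv_def]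

def e1 (n : ℕ) : (Σ f : {f : Fin n → Fin n // IsParkingFunction n f},
      {σ : Equiv.Perm (Fin n) // f.1 ∘ ⇑σ = f.1})
    ≃ {x : (Fin n → Fin n) × Equiv.Perm (Fin n) //
        IsParkingFunction n x.1 ∧ x.1 ∘ ⇑x.2 = x.1} where
  toFun a := ⟨(a.1.1, a.2.1), a.1.2, a.2.2⟩
  invFun x := ⟨⟨x.1.1, x.2.1⟩, ⟨x.1.2, x.2.2⟩⟩
  left_inv a := rfl
  right_inv x := rfl

def e3 (n : ℕ) : {y : (Fin n → Fin n) × Equiv.Perm (Fin n) //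
      Monotone y.1 ∧ IsParkingFunction n y.1}
    ≃ {w : Fin n → Fin n // Monotone w ∧ IsParkingFunction n w} × Equiv.Perm (Fin n) where
  toFun y := (⟨y.1.1, y.2⟩, y.1.2)
  invFun z := ⟨(z.1.1, z.2), z.1.2⟩
  left_inv y := rfl
  right_inv z := rfl

def e2 (n : ℕ) : {x : (Fin n → Fin n) × Equiv.Perm (Fin n) //
      IsParkingFunction n x.1 ∧ x.1 ∘ ⇑x.2 = x.1}
    ≃ {y : (Fin n → Fin n) × Equiv.Perm (Fin n) //
        Monotone y.1 ∧ IsParkingFunction n y.1} where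
  toFun x := ⟨(x.1.1 ∘ ⇑(Tuple.sort x.1.1), (Tuple.sort x.1.1)⁻¹ * x.1.2),
    Tuple.monotone_sort _, (park_comp _ _).mpr x.2.1⟩
  invFun y := ⟨(y.1.1 ∘ ⇑y.1.2, Tuple.sort (y.1.1 ∘ ⇑y.1.2) * y.1.2),
    (park_comp _ _).mpr y.2.2, by
      obtain ⟨⟨w, τ⟩, hm, hp⟩ := y
      show (w ∘ ⇑τ) ∘ ⇑(Tuple.sort (w ∘ ⇑τ) * τ) = w ∘ ⇑τ
      rw [Equiv.Perm.coe_mul, ← Function.comp_assoc, sort_comp w hm τ]⟩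
  left_inv x := by
    obtain ⟨⟨f, σ⟩, hp, hs⟩ := x
    apply Subtype.ext
    have h1 : (f ∘ ⇑(Tuple.sort f)) ∘ ⇑((Tuple.sort f)⁻¹ * σ) = f := by
      funext i
      simp only [Equiv.Perm.coe_mul, Function.comp_apply, Equiv.Perm.inv_def, Equiv.apply_symm_apply]
      exact congrFun hs i
    show ((f ∘ ⇑(Tuple.sort f)) ∘ ⇑((Tuple.sort f)⁻¹ * σ),
        Tuple.sort ((f ∘ ⇑(Tuple.sort f)) ∘ ⇑((Tuple.sort f)⁻¹ * σ)) *
          ((Tuple.sort f)⁻¹ * σ)) = (f, σ)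
    rw [h1, mul_inv_cancel_left]
  right_inv y := by
    obtain ⟨⟨w, τ⟩, hm, hp⟩ := y
    apply Subtype.ext
    show ((w ∘ ⇑τ) ∘ ⇑(Tuple.sort (w ∘ ⇑τ)),
        (Tuple.sort (w ∘ ⇑τ))⁻¹ * (Tuple.sort (w ∘ ⇑τ) * τ)) = (w, τ)
    rw [sort_comp w hm τ, inv_mul_cancel_left]

theorem main (n : ℕ) :
    (∑ f : {f : Fin n → Fin n // IsParkingFunction n f},
      ∏ i : Fin n, (fiberCard n f.1 i).factorial) = catalan n * n.factorial := by
  classical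
  have step1 : ∀ f : Fin n → Fin n, (∏ i : Fin n, (fiberCard n f i).factorial)
      = Fintype.card {σ : Equiv.Perm (Fin n) // f ∘ ⇑σ = f} := by
    intro f
    rw [DomMulAct.stabilizer_card f]
    refine Finset.prod_congr rfl fun i _ => ?_
    rw [fiberCard, Fintype.card_subtype]
  calc (∑ f : {f : Fin n → Fin n // IsParkingFunction n f},
          ∏ i : Fin n, (fiberCard n f.1 i).factorial)
      = ∑ f : {f : Fin n → Fin n // IsParkingFunction n f},
          Fintype.card {σ : Equiv.Perm (Fin n) // f.1 ∘ ⇑σ = f.1} :=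
        Finset.sum_congr rfl fun f _ => step1 f.1
    _ = Fintype.card (Σ f : {f : Fin n → Fin n // IsParkingFunction n f},
          {σ : Equiv.Perm (Fin n) // f.1 ∘ ⇑σ = f.1}) := (Fintype.card_sigma).symm
    _ = Nat.card (Σ f : {f : Fin n → Fin n // IsParkingFunction n f},
          {σ : Equiv.Perm (Fin n) // f.1 ∘ ⇑σ = f.1}) := Nat.card_eq_fintype_card.symm
    _ = Nat.card ({w : Fin n → Fin n // Monotone w ∧ IsParkingFunction n w}
          × Equiv.Perm (Fin n)) :=
        Nat.card_congr (((e1 n).trans (e2 n)).trans (e3 n))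
    _ = Nat.card {w : Fin n → Fin n // Monotone w ∧ IsParkingFunction n w}
          * Nat.card (Equiv.Perm (Fin n)) := Nat.card_prod _ _
    _ = catalan n * n.factorial := by
        congr 1
        · rw [Nat.card_congr (Equiv.subtypeEquivRight
            (fun w => and_congr_right fun hm => mono_park_iff hm)), card_mono_below]
        · rw [Nat.card_eq_fintype_card, Fintype.card_perm, Fintype.card_fin]

end PFAux

/-- `Σ_{f parking function on [n]} Π_i (m_i)! = (2n)! / (n+1)!`. -/
theorem sum_parkingFunctions_prod_factorial_fibers (n : ℕ) :
    ((∑ f : {f : Fin n → Fin n // IsParkingFunction n f},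
        ∏ i : Fin n, (fiberCard n f.1 i).factorial : ℕ) : ℚ) =
    ((2 * n).factorial : ℚ) / ((n + 1).factorial : ℚ) := by
  rw [PFAux.main n, eq_div_iff (by exact_mod_cast (Nat.factorial_ne_zero (n + 1)))]
  have h1 : (n + 1) * catalan n = n.centralBinom := by
    rw [catalan_eq_centralBinom_div]
    exact Nat.mul_div_cancel' n.succ_dvd_centralBinom
  have h2 : n.centralBinom * n.factorial * n.factorial = (2 * n).factorial := by
    rw [Nat.centralBinom]
    have h := Nat.choose_mul_factorial_mul_factorial (show n ≤ 2 * n by omega)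
    rwa [show 2 * n - n = n from by omega] at h
  have h3 : catalan n * n.factorial * (n + 1).factorial = (2 * n).factorial := by
    rw [Nat.factorial_succ]
    calc catalan n * n.factorial * ((n + 1) * n.factorial)
        = (n + 1) * catalan n * n.factorial * n.factorial := by ring
      _ = (2 * n).factorial := by rw [h1, h2]
  exact_mod_cast h3
end

section
/- The formal power series s(t) = Σ_{n≥0} 2^n·(n+1)^(n-1) · t^n/n! (with the n = 0 term equal to 1) satisfies the functional equation s(t) = exp(2t·s(t)) in ℚ[[t]]. (Its coefficients count parking-like structures over the subsets species, i.e., pairs consisting of a parking function on [n] together with a subset of [n].) -/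
open PowerSeries

/-- Composition `F(g)` of formal power series, valid (i.e., agreeing with the usual
substitution) whenever the constant term of `g` is zero. -/
noncomputable def seriesComp (F g : PowerSeries ℚ) : PowerSeries ℚ :=
  PowerSeries.mk fun n =>
    PowerSeries.coeff n (∑ k ∈ Finset.range (n + 1), PowerSeries.coeff k F • g ^ k)

/-- `s(t) = Σ_{n ≥ 0} 2^n · (n+1)^(n-1) · t^n / n!` (with constant term 1),
the EGF of parking-like structures over the subsets species. -/
noncomputable def subsetsParkingEGF : PowerSeries ℚ :=
  PowerSeries.mk fun n => (2 ^ n * (n + 1) ^ (n - 1) : ℕ) / (n.factorial : ℚ)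


section Aux
open Finset


lemma binom1 (x : ℚ) (d : ℕ) : (x+1)^d = ∑ e ∈ Finset.range (d+1), (d.choose e : ℚ) * x^e := by
  rw [add_pow]
  apply Finset.sum_congr rfl
  intro e _
  rw [one_pow]; ring

lemma fd : ∀ n : ℕ, ∀ d : ℕ, d < n →
    ∑ i ∈ Finset.range (n+1), (-1:ℚ)^i * (n.choose i : ℚ) * ((i:ℚ)+1)^d = 0 := by
  intro n
  induction n with
  | zero => omega
  | succ n ih =>
    intro d hd
    set p : ℕ → ℚ := fun i => ((i:ℚ)+1)^d with hp
    have key : ∑ i ∈ Finset.range (n+2), (-1:ℚ)^i * ((n+1).choose i : ℚ) * p i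
        = ∑ i ∈ Finset.range (n+1), (-1:ℚ)^i * (n.choose i : ℚ) * (p i - p (i+1)) := by
      rw [Finset.sum_range_succ' (fun i => (-1:ℚ)^i * ((n+1).choose i : ℚ) * p i) (n+1)]
      have hB : (∑ i ∈ Finset.range (n+1), (-1:ℚ)^(i+1) * (n.choose (i+1) : ℚ) * p (i+1))
          + (-1:ℚ)^0 * ((n+1).choose 0 : ℚ) * p 0
          = ∑ i ∈ Finset.range (n+1), (-1:ℚ)^i * (n.choose i : ℚ) * p i := by
        have h := Finset.sum_range_succ' (fun i => (-1:ℚ)^i * ((n.choose i : ℚ)) * p i) (n+1)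
        rw [Finset.sum_range_succ] at h
        simp only [Nat.choose_succ_self, Nat.cast_zero, mul_zero, zero_mul, add_zero,
          Nat.choose_zero_right, Nat.cast_one] at h ⊢
        exact h.symm
      calc (∑ i ∈ Finset.range (n+1), (-1:ℚ)^(i+1) * ((n+1).choose (i+1) : ℚ) * p (i+1))
            + (-1:ℚ)^0 * ((n+1).choose 0 : ℚ) * p 0
          = (∑ i ∈ Finset.range (n+1), (-((-1:ℚ)^i * (n.choose i : ℚ) * p (i+1))
              + (-1:ℚ)^(i+1) * (n.choose (i+1) : ℚ) * p (i+1)))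
            + (-1:ℚ)^0 * ((n+1).choose 0 : ℚ) * p 0 := by
            congr 1
            apply Finset.sum_congr rfl; intro i _
            rw [Nat.choose_succ_succ]
            push_cast
            ring
        _ = (∑ i ∈ Finset.range (n+1), -((-1:ℚ)^i * (n.choose i : ℚ) * p (i+1)))
            + ((∑ i ∈ Finset.range (n+1), (-1:ℚ)^(i+1) * (n.choose (i+1) : ℚ) * p (i+1))
              + (-1:ℚ)^0 * ((n+1).choose 0 : ℚ) * p 0) := by
            rw [Finset.sum_add_distrib]; ring
        _ = (∑ i ∈ Finset.range (n+1), -((-1:ℚ)^i * (n.choose i : ℚ) * p (i+1)))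
            + ∑ i ∈ Finset.range (n+1), (-1:ℚ)^i * (n.choose i : ℚ) * p i := by rw [hB]
        _ = ∑ i ∈ Finset.range (n+1), (-1:ℚ)^i * (n.choose i : ℚ) * (p i - p (i+1)) := by
            rw [← Finset.sum_add_distrib]
            apply Finset.sum_congr rfl; intro i _; ring
    rw [key]
    have expand : ∀ i : ℕ, p i - p (i+1)
        = -∑ e ∈ Finset.range d, (d.choose e : ℚ) * ((i:ℚ)+1)^e := by
      intro i
      have h2 : p (i+1) = (((i:ℚ)+1)+1)^d := by rw [hp]; push_cast; ring_nf
      rw [h2, binom1, Finset.sum_range_succ, Nat.choose_self, hp]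
      push_cast
      ring
    calc ∑ i ∈ Finset.range (n+1), (-1:ℚ)^i * (n.choose i : ℚ) * (p i - p (i+1))
        = ∑ i ∈ Finset.range (n+1), ∑ e ∈ Finset.range d,
            -((d.choose e : ℚ) * ((-1:ℚ)^i * (n.choose i : ℚ) * ((i:ℚ)+1)^e)) := by
          apply Finset.sum_congr rfl; intro i _
          rw [expand i, mul_neg, Finset.mul_sum, ← Finset.sum_neg_distrib]
          apply Finset.sum_congr rfl; intro e _; ring
      _ = ∑ e ∈ Finset.range d, -((d.choose e : ℚ) *
            ∑ i ∈ Finset.range (n+1), (-1:ℚ)^i * (n.choose i : ℚ) * ((i:ℚ)+1)^e) := by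
          rw [Finset.sum_comm]
          apply Finset.sum_congr rfl; intro e _
          rw [Finset.mul_sum, ← Finset.sum_neg_distrib]
      _ = 0 := by
          apply Finset.sum_eq_zero; intro e he
          have := Finset.mem_range.mp he
          rw [ih e (by omega)]
          simp

lemma abel (m : ℕ) (y : ℚ) :
    ∑ i ∈ Finset.range (m+1),
        (m.choose i : ℚ) * (((i:ℚ)+1)^i / ((i:ℚ)+1)) * (y + ((m-i : ℕ):ℚ))^(m-i)
      = (y + (m:ℚ) + 1)^m := by
  have hne : ∀ i : ℕ, ((i:ℚ)+1) ≠ 0 := fun i => by positivity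
  have ext_pow : ∀ (a b : ℚ) (N : ℕ), N ≤ m →
      (a+b)^N = ∑ j ∈ Finset.range (m+1), (N.choose j : ℚ) * a^j * b^(N-j) := by
    intro a b N hN
    rw [add_pow]
    rw [Finset.sum_subset (Finset.range_subset_range.mpr (by omega : N+1 ≤ m+1))
        (fun x _ hx => by
          have hNx : N < x := by simp only [Finset.mem_range, not_lt] at hx; omega
          rw [Nat.choose_eq_zero_of_lt hNx]; simp)]
    exact Finset.sum_congr rfl (fun j _ => by ring)
  set z : ℚ := y + (m:ℚ) + 1 with hzdef
  have step1 : ∑ i ∈ Finset.range (m+1),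
        (m.choose i : ℚ) * (((i:ℚ)+1)^i / ((i:ℚ)+1)) * (y + ((m-i : ℕ):ℚ))^(m-i)
      = ∑ i ∈ Finset.range (m+1), ∑ j ∈ Finset.range (m+1),
        (m.choose i : ℚ) * (((i:ℚ)+1)^i / ((i:ℚ)+1)) *
          (((m-i).choose j : ℚ) * z^j * (-((i:ℚ)+1))^((m-i)-j)) := by
    apply Finset.sum_congr rfl; intro i hi
    have him : i ≤ m := by have := Finset.mem_range.mp hi; omega
    have hcast : (((m-i : ℕ)):ℚ) = (m:ℚ) - (i:ℚ) := by
      rw [Nat.cast_sub him]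
    have hsplit : y + (((m-i : ℕ)):ℚ) = z + (-((i:ℚ)+1)) := by rw [hcast, hzdef]; ring
    rw [hsplit, ext_pow z (-((i:ℚ)+1)) (m-i) (by omega), Finset.mul_sum]
  rw [step1, Finset.sum_comm]
  have claim : ∀ j ∈ Finset.range (m+1),
      ∑ i ∈ Finset.range (m+1),
        (m.choose i : ℚ) * (((i:ℚ)+1)^i / ((i:ℚ)+1)) *
          (((m-i).choose j : ℚ) * z^j * (-((i:ℚ)+1))^((m-i)-j))
      = if j = m then z^m else 0 := by
    intro j hjr
    have hj : j ≤ m := by have := Finset.mem_range.mp hjr; omega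
    have swap : ∀ i, i ≤ m →
        (m.choose i : ℚ) * ((m-i).choose j : ℚ) = (m.choose j : ℚ) * ((m-j).choose i : ℚ) := by
      intro i him
      by_cases hij : i + j ≤ m
      · have h1 := Nat.choose_mul (n := m) (show i ≤ i+j by omega)
        have h2 := Nat.choose_mul (n := m) (show j ≤ i+j by omega)
        have h3 : (i+j).choose i = (i+j).choose j := by
          rw [← Nat.choose_symm (show i ≤ i+j by omega)]
          congr 1; omega
        have e1 : (i+j) - i = j := by omega
        have e2 : (i+j) - j = i := by omega
        rw [e1] at h1; rw [e2] at h2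
        have : m.choose i * ((m-i).choose j) = m.choose j * ((m-j).choose i) := by
          rw [← h1, ← h2, h3]
        exact_mod_cast congrArg (Nat.cast (R := ℚ)) this
      · have hz1 : (m-i).choose j = 0 := Nat.choose_eq_zero_of_lt (by omega)
        have hz2 : (m-j).choose i = 0 := Nat.choose_eq_zero_of_lt (by omega)
        rw [hz1, hz2]; simp
    have exps : ∀ i, (m-i)-j = (m-j)-i := by intro i; omega
    have step2 : ∑ i ∈ Finset.range (m+1),
        (m.choose i : ℚ) * (((i:ℚ)+1)^i / ((i:ℚ)+1)) *
          (((m-i).choose j : ℚ) * z^j * (-((i:ℚ)+1))^((m-i)-j))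
        = z^j * ((m.choose j : ℚ) * ∑ i ∈ Finset.range ((m-j)+1),
            ((m-j).choose i : ℚ) * (((i:ℚ)+1)^i / ((i:ℚ)+1)) * (-((i:ℚ)+1))^((m-j)-i)) := by
      rw [Finset.mul_sum, Finset.mul_sum]
      rw [← Finset.sum_subset (Finset.range_subset_range.mpr (by omega : (m-j)+1 ≤ m+1))
          (fun x hx hnx => by
            have h1 : m - j < x := by simp only [Finset.mem_range, not_lt] at hnx; omega
            have h2 : m - x < j := by have := Finset.mem_range.mp hx; omega
            rw [Nat.choose_eq_zero_of_lt h2]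
            simp)]
      apply Finset.sum_congr rfl; intro i hi
      have him : i ≤ m - j := by have := Finset.mem_range.mp hi; omega
      rw [exps i]
      have hsw := swap i (by omega)
      linear_combination (((i:ℚ)+1)^i / ((i:ℚ)+1)) * z^j * (-((i:ℚ)+1))^((m-j)-i) * hsw
    rw [step2]
    set n' := m - j with hn'
    rcases Nat.eq_zero_or_pos n' with h0 | hpos
    · have hjm : j = m := by omega
      rw [h0]
      simp [hjm]
    · have hjm : j ≠ m := by omega
      have inner0 : ∑ i ∈ Finset.range (n'+1),
          (n'.choose i : ℚ) * (((i:ℚ)+1)^i / ((i:ℚ)+1)) * (-((i:ℚ)+1))^(n'-i) = 0 := by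
        have repl : ∀ i ∈ Finset.range (n'+1),
            (n'.choose i : ℚ) * (((i:ℚ)+1)^i / ((i:ℚ)+1)) * (-((i:ℚ)+1))^(n'-i)
            = (-1:ℚ)^n' * ((-1:ℚ)^i * (n'.choose i : ℚ) * ((i:ℚ)+1)^(n'-1)) := by
          intro i hi
          have hin : i ≤ n' := by have := Finset.mem_range.mp hi; omega
          have hpow1 : (((i:ℚ)+1)^i / ((i:ℚ)+1)) * ((i:ℚ)+1)^(n'-i) = ((i:ℚ)+1)^(n'-1) := by
            rw [div_mul_eq_mul_div, ← pow_add]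
            have : i + (n' - i) = (n'-1) + 1 := by omega
            rw [this, pow_succ, mul_div_assoc, div_self (hne i), mul_one]
          have hneg : (-((i:ℚ)+1))^(n'-i) = (-1:ℚ)^(n'-i) * ((i:ℚ)+1)^(n'-i) := by
            rw [neg_pow]
          have hsign : (-1:ℚ)^(n'-i) = (-1:ℚ)^n' * (-1:ℚ)^i := by
            have h4 : (-1:ℚ)^(n'-i) * (-1:ℚ)^i = (-1:ℚ)^n' := by
              rw [← pow_add]; congr 1; omega
            have h5 : ((-1:ℚ)^i) * ((-1:ℚ)^i) = 1 := by
              rw [← pow_add, ← two_mul, pow_mul]; norm_num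
            calc (-1:ℚ)^(n'-i) = (-1:ℚ)^(n'-i) * (((-1:ℚ)^i) * ((-1:ℚ)^i)) := by rw [h5, mul_one]
              _ = (-1:ℚ)^n' * (-1:ℚ)^i := by rw [← mul_assoc, h4]
          rw [hneg, hsign]
          calc (n'.choose i : ℚ) * (((i:ℚ)+1)^i / ((i:ℚ)+1)) *
                ((-1:ℚ)^n' * (-1:ℚ)^i * ((i:ℚ)+1)^(n'-i))
              = (-1:ℚ)^n' * ((-1:ℚ)^i * (n'.choose i : ℚ) *
                  ((((i:ℚ)+1)^i / ((i:ℚ)+1)) * ((i:ℚ)+1)^(n'-i))) := by ring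
            _ = (-1:ℚ)^n' * ((-1:ℚ)^i * (n'.choose i : ℚ) * ((i:ℚ)+1)^(n'-1)) := by rw [hpow1]
        rw [Finset.sum_congr rfl repl, ← Finset.mul_sum, fd n' (n'-1) (by omega), mul_zero]
      rw [inner0]
      simp [hjm]
  rw [Finset.sum_congr rfl claim]
  rw [Finset.sum_ite_eq' (Finset.range (m+1)) m (fun _ => z^m)]
  simp

lemma forest_conv (m k : ℕ) :
    ∑ i ∈ Finset.range (m+1),
        (m.choose i : ℚ) * (((i:ℚ)+1)^i / ((i:ℚ)+1)) *
          (((k:ℚ)+1) * ((((m-i:ℕ):ℚ)+(k:ℚ)+1)^(m-i) / (((m-i:ℕ):ℚ)+(k:ℚ)+1)))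
      = ((k:ℚ)+2) * (((m:ℚ)+(k:ℚ)+2)^m / ((m:ℚ)+(k:ℚ)+2)) := by
  rcases Nat.eq_zero_or_pos m with hm | hm
  · subst hm
    rw [Finset.sum_range_one]
    have h1 : ((k:ℚ)+1) ≠ 0 := by positivity
    have h2 : ((k:ℚ)+2) ≠ 0 := by positivity
    norm_num
    field_simp
  · have hxne : ∀ j : ℕ, ((j:ℚ)+(k:ℚ)+1) ≠ 0 := fun j => by positivity
    -- split each term:  (k+1)*x^j/x = x^j - j*x^j/x  where x = j+k+1
    have split : ∀ i ∈ Finset.range (m+1),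
        (m.choose i : ℚ) * (((i:ℚ)+1)^i / ((i:ℚ)+1)) *
          (((k:ℚ)+1) * ((((m-i:ℕ):ℚ)+(k:ℚ)+1)^(m-i) / (((m-i:ℕ):ℚ)+(k:ℚ)+1)))
        = (m.choose i : ℚ) * (((i:ℚ)+1)^i / ((i:ℚ)+1)) * ((((k:ℚ)+1) + ((m-i:ℕ):ℚ))^(m-i))
          - (m.choose i : ℚ) * (((i:ℚ)+1)^i / ((i:ℚ)+1)) *
            (((m-i:ℕ):ℚ) * ((((m-i:ℕ):ℚ)+(k:ℚ)+1)^(m-i) / (((m-i:ℕ):ℚ)+(k:ℚ)+1))) := by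
      intro i _
      have hne1 : ((i:ℚ)+1) ≠ 0 := by positivity
      have hx := hxne (m-i)
      field_simp
      ring
    rw [Finset.sum_congr rfl split, Finset.sum_sub_distrib]
    have hA : ∑ i ∈ Finset.range (m+1),
        (m.choose i : ℚ) * (((i:ℚ)+1)^i / ((i:ℚ)+1)) * ((((k:ℚ)+1) + ((m-i:ℕ):ℚ))^(m-i))
        = ((m:ℚ)+(k:ℚ)+2)^m := by
      have := abel m ((k:ℚ)+1)
      rw [this]
      ring_nf
    have hB : ∑ i ∈ Finset.range (m+1),
        (m.choose i : ℚ) * (((i:ℚ)+1)^i / ((i:ℚ)+1)) *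
          (((m-i:ℕ):ℚ) * ((((m-i:ℕ):ℚ)+(k:ℚ)+1)^(m-i) / (((m-i:ℕ):ℚ)+(k:ℚ)+1)))
        = (m:ℚ) * ((m:ℚ)+(k:ℚ)+2)^(m-1) := by
      rw [Finset.sum_range_succ]
      have hlast : (m.choose m : ℚ) * (((m:ℚ)+1)^m / ((m:ℚ)+1)) *
          (((m-m:ℕ):ℚ) * ((((m-m:ℕ):ℚ)+(k:ℚ)+1)^(m-m) / (((m-m:ℕ):ℚ)+(k:ℚ)+1))) = 0 := by
        simp
      rw [hlast, add_zero]
      have repl : ∀ i ∈ Finset.range m,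
          (m.choose i : ℚ) * (((i:ℚ)+1)^i / ((i:ℚ)+1)) *
            (((m-i:ℕ):ℚ) * ((((m-i:ℕ):ℚ)+(k:ℚ)+1)^(m-i) / (((m-i:ℕ):ℚ)+(k:ℚ)+1)))
          = (m:ℚ) * (((m-1).choose i : ℚ) * (((i:ℚ)+1)^i / ((i:ℚ)+1)) *
              ((((k:ℚ)+2) + (((m-1)-i:ℕ):ℚ))^((m-1)-i))) := by
        intro i hi
        have him : i ≤ m - 1 := by have := Finset.mem_range.mp hi; omega
        have hj1 : (m - i : ℕ) = ((m-1)-i) + 1 := by omega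
        have hc : (m.choose i : ℚ) * ((m-i:ℕ):ℚ) = (m:ℚ) * ((m-1).choose i : ℚ) := by
          have hnat : (m-1).choose i * m = m.choose i * (m - i) := by
            have := Nat.choose_mul_succ_eq (m-1) i
            have hm1 : m - 1 + 1 = m := by omega
            rw [hm1] at this
            exact this
          have := congrArg (Nat.cast (R := ℚ)) hnat
          push_cast at this
          linarith [this]
        have hpows : ((((m-i:ℕ)):ℚ)+(k:ℚ)+1)^(m-i) / ((((m-i:ℕ)):ℚ)+(k:ℚ)+1)
            = (((k:ℚ)+2) + (((m-1)-i:ℕ):ℚ))^((m-1)-i) := by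
          have hc2 : (((m-i:ℕ)):ℚ)+(k:ℚ)+1 = ((k:ℚ)+2) + (((m-1)-i:ℕ):ℚ) := by
            rw [hj1]; push_cast; ring
          rw [hc2, hj1, pow_succ]
          rw [mul_div_assoc, div_self (by rw [← hc2]; exact hxne (m-i)), mul_one]
        rw [hpows]
        calc (m.choose i : ℚ) * (((i:ℚ)+1)^i / ((i:ℚ)+1)) *
              (((m-i:ℕ):ℚ) * ((((k:ℚ)+2) + (((m-1)-i:ℕ):ℚ))^((m-1)-i)))
            = ((m.choose i : ℚ) * ((m-i:ℕ):ℚ)) * ((((i:ℚ)+1)^i / ((i:ℚ)+1)) *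
                (((k:ℚ)+2) + (((m-1)-i:ℕ):ℚ))^((m-1)-i)) := by ring
          _ = ((m:ℚ) * ((m-1).choose i : ℚ)) * ((((i:ℚ)+1)^i / ((i:ℚ)+1)) *
                (((k:ℚ)+2) + (((m-1)-i:ℕ):ℚ))^((m-1)-i)) := by rw [hc]
          _ = (m:ℚ) * (((m-1).choose i : ℚ) * (((i:ℚ)+1)^i / ((i:ℚ)+1)) *
                ((((k:ℚ)+2) + (((m-1)-i:ℕ):ℚ))^((m-1)-i))) := by ring
      rw [Finset.sum_congr rfl repl, ← Finset.mul_sum]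
      have hrange : Finset.range m = Finset.range ((m-1)+1) := by congr 1; omega
      rw [hrange, abel (m-1) ((k:ℚ)+2)]
      congr 2
      push_cast [Nat.cast_sub (by omega : 1 ≤ m)]
      ring
    rw [hA, hB]
    have hne2 : ((m:ℚ)+(k:ℚ)+2) ≠ 0 := by positivity
    have hms : ((m:ℚ)+(k:ℚ)+2)^m = ((m:ℚ)+(k:ℚ)+2) * ((m:ℚ)+(k:ℚ)+2)^(m-1) := by
      rw [← pow_succ']
      congr 1; omega
    rw [hms]
    field_simp
    ring

lemma fact_ne (n : ℕ) : ((n.factorial : ℚ)) ≠ 0 :=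
  Nat.cast_ne_zero.mpr (Nat.factorial_ne_zero n)

lemma coeffS (m : ℕ) : PowerSeries.coeff m subsetsParkingEGF
    = 2^m * (((m:ℚ)+1)^m / ((m:ℚ)+1)) / (m.factorial : ℚ) := by
  rw [subsetsParkingEGF, coeff_mk]
  cases m with
  | zero => norm_num
  | succ m =>
    have h1 : ((m:ℚ)+1+1) ≠ 0 := by positivity
    push_cast
    rw [pow_succ ((m:ℚ)+1+1) m]
    rw [mul_comm (((m:ℚ)+1+1)^m) (((m:ℚ)+1+1)), mul_div_assoc, mul_div_cancel_left₀ _ h1, mul_div_assoc]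
lemma forest : ∀ k m : ℕ, PowerSeries.coeff m (subsetsParkingEGF^(k+1))
    = 2^m * (((k:ℚ)+1) * (((m:ℚ)+(k:ℚ)+1)^m / ((m:ℚ)+(k:ℚ)+1))) / (m.factorial : ℚ) := by
  intro k
  induction k with
  | zero =>
    intro m
    rw [pow_one, coeffS]
    norm_num
  | succ k ih =>
    intro m
    rw [pow_succ', coeff_mul, Finset.Nat.sum_antidiagonal_eq_sum_range_succ_mk]
    have repl : ∀ i ∈ Finset.range (m+1),
        PowerSeries.coeff i subsetsParkingEGF * PowerSeries.coeff (m-i) (subsetsParkingEGF^(k+1))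
        = (2^m / (m.factorial : ℚ)) * ((m.choose i : ℚ) * (((i:ℚ)+1)^i / ((i:ℚ)+1)) *
            (((k:ℚ)+1) * ((((m-i:ℕ):ℚ)+(k:ℚ)+1)^(m-i) / (((m-i:ℕ):ℚ)+(k:ℚ)+1)))) := by
      intro i hi
      have him : i ≤ m := by have := Finset.mem_range.mp hi; omega
      rw [coeffS, ih (m-i)]
      have h2 : (2:ℚ)^i * 2^(m-i) = 2^m := by rw [← pow_add]; congr 1; omega
      have hfac : ((m.choose i : ℚ)) * (i.factorial : ℚ) * ((m-i).factorial : ℚ)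
          = (m.factorial : ℚ) := by
        exact_mod_cast congrArg (Nat.cast (R := ℚ))
          (Nat.choose_mul_factorial_mul_factorial him)
      have hprod : ((i.factorial : ℚ)) * ((m-i).factorial : ℚ) ≠ 0 :=
        mul_ne_zero (fact_ne i) (fact_ne (m-i))
      rw [div_mul_div_comm, div_mul_eq_mul_div, div_eq_div_iff hprod (fact_ne m)]
      linear_combination ((((i:ℚ)+1)^i / ((i:ℚ)+1)) *
          (((k:ℚ)+1) * ((((m-i:ℕ):ℚ)+(k:ℚ)+1)^(m-i) / (((m-i:ℕ):ℚ)+(k:ℚ)+1))) *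
          (m.factorial : ℚ)) * h2
        - ((2:ℚ)^m * (((i:ℚ)+1)^i / ((i:ℚ)+1)) *
          (((k:ℚ)+1) * ((((m-i:ℕ):ℚ)+(k:ℚ)+1)^(m-i) / (((m-i:ℕ):ℚ)+(k:ℚ)+1)))) * hfac
    rw [Finset.sum_congr rfl repl, ← Finset.mul_sum, forest_conv m k]
    push_cast
    ring

lemma final_sum (n : ℕ) (hn : 1 ≤ n) :
    ∑ t ∈ Finset.range n, (n.choose (t+1) : ℚ) * ((t:ℚ)+1) * (n:ℚ)^(n-1-t)
      = (n:ℚ) * ((n:ℚ)+1)^(n-1) := by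
  have repl : ∀ t ∈ Finset.range n,
      (n.choose (t+1) : ℚ) * ((t:ℚ)+1) * (n:ℚ)^(n-1-t)
      = (n:ℚ) * (((n-1).choose t : ℚ) * (1:ℚ)^t * (n:ℚ)^((n-1)-t)) := by
    intro t ht
    have hnat : n * (n-1).choose t = n.choose (t+1) * (t+1) := by
      have := Nat.add_one_mul_choose_eq (n-1) t
      have hm1 : n - 1 + 1 = n := by omega
      simp only [Nat.succ_eq_add_one, hm1] at this
      exact this
    have hq : (n:ℚ) * ((n-1).choose t : ℚ) = (n.choose (t+1) : ℚ) * ((t:ℚ)+1) := by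
      exact_mod_cast congrArg (Nat.cast (R := ℚ)) hnat
    have hexp : n - 1 - t = (n-1) - t := by omega
    rw [hexp, one_pow, mul_one, ← mul_assoc, ← hq]
  rw [Finset.sum_congr rfl repl, ← Finset.mul_sum]
  congr 1
  have hr : Finset.range n = Finset.range ((n-1)+1) := by congr 1; omega
  rw [hr]
  calc ∑ i ∈ Finset.range ((n-1)+1), ((n-1).choose i : ℚ) * (1:ℚ)^i * (n:ℚ)^((n-1)-i)
      = ∑ i ∈ Finset.range ((n-1)+1), (1:ℚ)^i * (n:ℚ)^((n-1)-i) * ((n-1).choose i : ℚ) := by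
        exact Finset.sum_congr rfl fun i _ => by ring
    _ = ((1:ℚ)+(n:ℚ))^(n-1) := (add_pow (1:ℚ) (n:ℚ) (n-1)).symm
    _ = ((n:ℚ)+1)^(n-1) := by ring_nf


end Aux

/-- `s(t) = exp (2t · s(t))` in `ℚ⟦t⟧`. -/
theorem subsetsParkingEGF_eq_exp_comp :
    subsetsParkingEGF =
      seriesComp (PowerSeries.exp ℚ) (2 * PowerSeries.X * subsetsParkingEGF) := by
  ext n
  rw [seriesComp, coeff_mk, map_sum]
  have hC2 : (2 : PowerSeries ℚ) = PowerSeries.C 2 := by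
    exact (map_ofNat (PowerSeries.C) 2).symm
  have hg : ∀ k : ℕ, k ≤ n → PowerSeries.coeff n ((2 * PowerSeries.X * subsetsParkingEGF)^k)
      = 2^k * PowerSeries.coeff (n-k) (subsetsParkingEGF^k) := by
    intro k hk
    have e1 : (2 * PowerSeries.X * subsetsParkingEGF)^k
        = PowerSeries.C (2^k) * (PowerSeries.X^k * subsetsParkingEGF^k) := by
      rw [map_pow, ← hC2]
      ring
    rw [e1, PowerSeries.coeff_C_mul, PowerSeries.coeff_X_pow_mul', if_pos hk]
  have hterm : ∀ k ∈ Finset.range (n+1),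
      PowerSeries.coeff k (PowerSeries.exp ℚ) • PowerSeries.coeff n
        ((2 * PowerSeries.X * subsetsParkingEGF)^k)
      = (1 / (k.factorial : ℚ)) * (2^k * PowerSeries.coeff (n-k) (subsetsParkingEGF^k)) := by
    intro k hk
    have hkn : k ≤ n := by have := Finset.mem_range.mp hk; omega
    rw [smul_eq_mul, PowerSeries.coeff_exp, hg k hkn]
    norm_num
  simp only [map_smul]
  rw [Finset.sum_congr rfl hterm]
  rcases Nat.eq_zero_or_pos n with h0 | hpos
  · subst h0
    rw [Finset.sum_range_one, coeffS]
    norm_num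
  · rw [Finset.sum_range_succ' (fun k => (1 / (k.factorial : ℚ)) *
      (2^k * PowerSeries.coeff (n-k) (subsetsParkingEGF^k))) n]
    have hzero : (1 / ((0:ℕ).factorial : ℚ)) *
        (2^0 * PowerSeries.coeff (n-0) (subsetsParkingEGF^0)) = 0 := by
      have hS0 : (subsetsParkingEGF : PowerSeries ℚ)^0 = 1 := pow_zero _
      rw [hS0, PowerSeries.coeff_one, if_neg (by omega)]
      simp
    rw [hzero, add_zero]
    have repl2 : ∀ t ∈ Finset.range n,
        (1 / ((t+1).factorial : ℚ)) *
          (2^(t+1) * PowerSeries.coeff (n-(t+1)) (subsetsParkingEGF^(t+1)))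
        = (2^n / ((n.factorial : ℚ) * (n:ℚ))) *
            ((n.choose (t+1) : ℚ) * ((t:ℚ)+1) * (n:ℚ)^(n-1-t)) := by
      intro t ht
      have htn : t < n := Finset.mem_range.mp ht
      rw [forest t (n-(t+1))]
      have hcast : ((n-(t+1) : ℕ):ℚ) + (t:ℚ) + 1 = (n:ℚ) := by
        rw [Nat.cast_sub (by omega : t+1 ≤ n)]
        push_cast
        ring
      rw [hcast]
      have hexp2 : n - (t+1) = n - 1 - t := by omega
      rw [hexp2]
      have h2 : (2:ℚ)^(t+1) * 2^(n-1-t) = 2^n := by rw [← pow_add]; congr 1; omega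
      have hfac : ((n.choose (t+1) : ℚ)) * ((t+1).factorial : ℚ) * ((n-(t+1)).factorial : ℚ)
          = (n.factorial : ℚ) := by
        exact_mod_cast congrArg (Nat.cast (R := ℚ))
          (Nat.choose_mul_factorial_mul_factorial (by omega : t+1 ≤ n))
      rw [hexp2] at hfac
      have hnne : (n:ℚ) ≠ 0 := by positivity
      have hne1 : ((t+1).factorial : ℚ) ≠ 0 := fact_ne (t+1)
      have hne2 : ((n-1-t).factorial : ℚ) ≠ 0 := fact_ne (n-1-t)
      have hne3 : (n.factorial : ℚ) ≠ 0 := fact_ne n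
      field_simp
      linear_combination ((n.factorial:ℚ)) * h2
        - ((2:ℚ)^n) * hfac
    rw [Finset.sum_congr rfl repl2, ← Finset.mul_sum, final_sum n hpos, coeffS]
    have hn1 : ((n:ℚ)+1)^n = ((n:ℚ)+1)^(n-1) * ((n:ℚ)+1) := by
      rw [← pow_succ]
      congr 1; omega
    rw [hn1]
    have hnne : (n:ℚ) ≠ 0 := by positivity
    have hnne1 : ((n:ℚ)+1) ≠ 0 := by positivity
    field_simp
end
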